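/- In the binary-state rating model, assume F is concave on [0,1], k ∈ (0,1), and μ0 ∈ (0,1). Then there exist ν_M, ν_H with 0 < ν_M < ν_H ≤ 1 such that for every ν ∈ (ν_M, ν_H) there is δ > 0 for which the Bayes-plausible belief system with μ_L = μ0 − δ, μ_H = μ0 + δ and τ_L = τ_H = 1/2 has value strictly greater than max{F(μ0), F(μ0) + (ν − k + kμ0)/(1 − ν)}, the best value attainable by an uninformative (pooling) belief system. Hence for ν ∈ (ν_M, ν_H) every optimal rating policy is informative. -/

import Mathlib

open scoped BigOperators

noncomputable section

/-- Value of a belief system in the binary-state rating model: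
`v̂(μ, H) = F(μ) + b − c(1−μ)` and `v̂(μ, L) = F(μ)`. -/
def ratingValue (F : ℝ → ℝ) (b c μL μH τL τH : ℝ) : ℝ :=
  τL * F μL + τH * (F μH + b - c * (1 - μH))

/-- A Bayes-plausible belief system in the binary-state rating model. -/
def IsBayesPlausibleBS (μ0 μL μH τL τH : ℝ) : Prop :=
  μL ∈ Set.Icc (0 : ℝ) 1 ∧ μH ∈ Set.Icc (0 : ℝ) 1 ∧ 0 ≤ τL ∧ 0 ≤ τH ∧
  τL + τH = 1 ∧ τL * μL + τH * μH = μ0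

/-- An optimal belief system in the binary-state rating model. -/
def IsOptimalBS (F : ℝ → ℝ) (b c μ0 μL μH τL τH : ℝ) : Prop :=
  IsBayesPlausibleBS μ0 μL μH τL τH ∧
  ∀ μL' μH' τL' τH' : ℝ, IsBayesPlausibleBS μ0 μL' μH' τL' τH' →
    ratingValue F b c μL' μH' τL' τH' ≤ ratingValue F b c μL μH τL τH

/-- A belief system is uninformative at prior `μ0` if every rating issued with
positive probability leaves the posterior at `μ0`. -/
def Uninformative (μ0 μL μH τL τH : ℝ) : Prop :=
  (τL = 0 ∨ μL = μ0) ∧ (τH = 0 ∨ μH = μ0)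

set_option maxHeartbeats 1000000 in
/-- With concave `F`, `k ∈ (0,1)` and prior `μ0 ∈ (0,1)`, for a
middle range of fractions of naive investors `ν ∈ (νM, νH)` there is a symmetric
informative split `{μ0 − δ, μ0 + δ}` strictly better than the best uninformative
(pooling) value `max{F(μ0), F(μ0) + (ν − k + kμ0)/(1 − ν)}`; hence every optimal
rating policy is informative. -/
theorem informative_rating_for_moderate_naive_investors
    (F : ℝ → ℝ)
    (hF : ContDiffOn ℝ 2 F (Set.Icc 0 1))
    (hmono : MonotoneOn F (Set.Icc 0 1))
    (hF0 : F 0 = 0) (hF1 : F 1 = 1)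
    (hconc : ConcaveOn ℝ (Set.Icc (0 : ℝ) 1) F)
    (k : ℝ) (hk : k ∈ Set.Ioo (0 : ℝ) 1)
    (μ0 : ℝ) (hμ0 : μ0 ∈ Set.Ioo (0 : ℝ) 1) :
    ∃ νM νH : ℝ, 0 < νM ∧ νM < νH ∧ νH ≤ 1 ∧
      ∀ ν : ℝ, νM < ν → ν < νH →
        (∃ δ : ℝ, 0 < δ ∧ 0 ≤ μ0 - δ ∧ μ0 + δ ≤ 1 ∧
          max (F μ0) (F μ0 + (ν - k + k * μ0) / (1 - ν)) <
            ratingValue F (ν / (1 - ν)) (k / (1 - ν))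
              (μ0 - δ) (μ0 + δ) (1 / 2) (1 / 2)) ∧
        (∀ μL μH τL τH : ℝ,
          IsOptimalBS F (ν / (1 - ν)) (k / (1 - ν)) μ0 μL μH τL τH →
          ¬ Uninformative μ0 μL μH τL τH) := by
  obtain ⟨hk0, hk1⟩ := hk
  obtain ⟨hμ0a, hμ0b⟩ := hμ0
  have hmem : μ0 ∈ Set.Icc (0:ℝ) 1 := ⟨le_of_lt hμ0a, le_of_lt hμ0b⟩
  have hIcc : Set.Icc (0:ℝ) 1 ∈ nhds μ0 := Icc_mem_nhds hμ0a hμ0b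
  have hdiff : DifferentiableAt ℝ F μ0 :=
    ((hF.differentiableOn (by norm_num)) μ0 hmem).differentiableAt hIcc
  have hS : Filter.Tendsto (slope F μ0) (nhdsWithin μ0 {μ0}ᶜ) (nhds (deriv F μ0)) :=
    hasDerivAt_iff_tendsto_slope.mp hdiff.hasDerivAt
  have h1 : Filter.Tendsto (fun δ : ℝ => μ0 + δ) (nhdsWithin 0 (Set.Ioi 0))
      (nhdsWithin μ0 {μ0}ᶜ) := by
    rw [tendsto_nhdsWithin_iff]
    constructor
    · have h := (Continuous.tendsto (by continuity : Continuous fun δ : ℝ => μ0 + δ) 0)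
      simp only [add_zero] at h
      exact h.mono_left nhdsWithin_le_nhds
    · filter_upwards [self_mem_nhdsWithin] with δ hδ
      have hδ' : (0:ℝ) < δ := hδ
      simp only [Set.mem_compl_iff, Set.mem_singleton_iff]
      intro h
      linarith
  have h2 : Filter.Tendsto (fun δ : ℝ => μ0 - δ) (nhdsWithin 0 (Set.Ioi 0))
      (nhdsWithin μ0 {μ0}ᶜ) := by
    rw [tendsto_nhdsWithin_iff]
    constructor
    · have h := (Continuous.tendsto (by continuity : Continuous fun δ : ℝ => μ0 - δ) 0)
      simp only [sub_zero] at h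
      exact h.mono_left nhdsWithin_le_nhds
    · filter_upwards [self_mem_nhdsWithin] with δ hδ
      have hδ' : (0:ℝ) < δ := hδ
      simp only [Set.mem_compl_iff, Set.mem_singleton_iff]
      intro h
      linarith
  have hg : Filter.Tendsto (fun δ : ℝ => slope F μ0 (μ0 + δ) - slope F μ0 (μ0 - δ))
      (nhdsWithin 0 (Set.Ioi 0)) (nhds 0) := by
    have h := (hS.comp h1).sub (hS.comp h2)
    simpa using h
  have hev : ∀ᶠ δ : ℝ in nhdsWithin 0 (Set.Ioi 0),
      -(k/2) < slope F μ0 (μ0 + δ) - slope F μ0 (μ0 - δ) :=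
    hg.eventually (eventually_gt_nhds (by linarith : -(k/2) < (0:ℝ)))
  have hm : ∀ᶠ δ : ℝ in nhdsWithin 0 (Set.Ioi 0), δ ∈ Set.Ioo 0 (min μ0 (1 - μ0)) :=
    Ioo_mem_nhdsGT_of_mem ⟨le_refl 0, lt_min hμ0a (by linarith)⟩
  obtain ⟨δ0, h₁, h₂⟩ := (hev.and hm).exists
  have hδ0 : 0 < δ0 := h₂.1
  have hδμ : δ0 < μ0 := lt_of_lt_of_le h₂.2 (min_le_left _ _)
  have hδμ' : δ0 < 1 - μ0 := lt_of_lt_of_le h₂.2 (min_le_right _ _)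
  have hδne : δ0 ≠ 0 := ne_of_gt hδ0
  have hslope : slope F μ0 (μ0 + δ0) - slope F μ0 (μ0 - δ0)
      = (F (μ0 + δ0) + F (μ0 - δ0) - 2 * F μ0) / δ0 := by
    rw [slope_def_field, slope_def_field]
    have e1 : μ0 + δ0 - μ0 = δ0 := by ring
    have e2 : μ0 - δ0 - μ0 = -δ0 := by ring
    rw [e1, e2, div_neg, sub_neg_eq_add, ← add_div]
    congr 1
    ring
  rw [hslope, lt_div_iff₀ hδ0] at h₁
  set νstar : ℝ := k * (1 - μ0) with hνsdef
  have hνs0 : 0 < νstar := mul_pos hk0 (by linarith)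
  have hνs1 : νstar < 1 := by nlinarith
  set ε : ℝ := min (k * δ0 / 2) (min (νstar / 2) ((1 - νstar) / 2)) with hεdef
  have hε1 : ε ≤ k * δ0 / 2 := min_le_left _ _
  have hε2 : ε ≤ νstar / 2 := le_trans (min_le_right _ _) (min_le_left _ _)
  have hε3 : ε ≤ (1 - νstar) / 2 := le_trans (min_le_right _ _) (min_le_right _ _)
  have hε0 : 0 < ε := lt_min (by positivity) (lt_min (by positivity) (by linarith))
  refine ⟨νstar - ε, νstar + ε, by linarith, by linarith, by linarith, ?_⟩
  intro ν hν1 hν2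
  have hν0 : 0 < ν := by linarith
  have hνlt1 : ν < 1 := by linarith
  have hw : 0 < 1 - ν := by linarith
  have hwne : (1 - ν) ≠ 0 := ne_of_gt hw
  set s : ℝ := ν - k + k * μ0 with hsdef
  have hss : s = ν - νstar := by rw [hsdef, hνsdef]; ring
  have hs1 : -(k * δ0 / 2) < s := by rw [hss]; linarith
  have hs2 : s < k * δ0 / 2 := by rw [hss]; linarith
  have hval : ratingValue F (ν / (1 - ν)) (k / (1 - ν)) (μ0 - δ0) (μ0 + δ0) (1/2) (1/2)
      = F μ0 + (F (μ0 + δ0) + F (μ0 - δ0) - 2 * F μ0) / 2 + (s + k * δ0) / (2 * (1 - ν)) := by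
    rw [hsdef]
    simp only [ratingValue]
    field_simp
    ring
  have hT1 : (s + k * δ0) / 2 ≤ (s + k * δ0) / (2 * (1 - ν)) := by
    rw [div_le_div_iff₀ (by norm_num) (by linarith)]
    have hpos : 0 ≤ s + k * δ0 := by linarith
    nlinarith [mul_nonneg hpos hν0.le]
  have hT2 : (k * δ0 - s) / 2 ≤ (k * δ0 - s) / (2 * (1 - ν)) := by
    rw [div_le_div_iff₀ (by norm_num) (by linarith)]
    have hpos : 0 ≤ k * δ0 - s := by linarith
    nlinarith [mul_nonneg hpos hν0.le]
  have key1 : F μ0 < ratingValue F (ν / (1 - ν)) (k / (1 - ν)) (μ0 - δ0) (μ0 + δ0) (1/2) (1/2) := by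
    rw [hval]
    linarith
  have key2 : F μ0 + s / (1 - ν)
      < ratingValue F (ν / (1 - ν)) (k / (1 - ν)) (μ0 - δ0) (μ0 + δ0) (1/2) (1/2) := by
    rw [hval]
    have hid : (s + k * δ0) / (2 * (1 - ν)) = s / (1 - ν) + (k * δ0 - s) / (2 * (1 - ν)) := by
      field_simp
      ring
    rw [hid]
    linarith
  have hplaus : IsBayesPlausibleBS μ0 (μ0 - δ0) (μ0 + δ0) (1/2) (1/2) :=
    ⟨⟨by linarith, by linarith⟩, ⟨by linarith, by linarith⟩, by norm_num, by norm_num,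
      by norm_num, by ring⟩
  refine ⟨⟨δ0, hδ0, by linarith, by linarith, max_lt key1 key2⟩, ?_⟩
  intro μL μH τL τH hopt hun
  obtain ⟨⟨_, _, hτL0, hτH0, hsum, _⟩, hbest⟩ := hopt
  have hle := hbest (μ0 - δ0) (μ0 + δ0) (1/2) (1/2) hplaus
  have hbc : ν / (1 - ν) - (k / (1 - ν)) * (1 - μ0) = s / (1 - ν) := by
    rw [hsdef]; field_simp; ring
  have hub : ratingValue F (ν / (1 - ν)) (k / (1 - ν)) μL μH τL τH
      ≤ max (F μ0) (F μ0 + s / (1 - ν)) := by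
    obtain ⟨hL, hH⟩ := hun
    rcases hH with hH | hH
    · have hτL1 : τL = 1 := by linarith
      rcases hL with hL | hL
      · exfalso; rw [hL] at hτL1; norm_num at hτL1
      · simp only [ratingValue, hH, hL, hτL1]
        have he : (1:ℝ) * F μ0 + 0 * (F μH + ν / (1 - ν) - k / (1 - ν) * (1 - μH)) = F μ0 := by
          ring
        rw [he]
        exact le_max_left _ _
    · rcases hL with hL | hL
      · have hτH1 : τH = 1 := by linarith
        simp only [ratingValue, hL, hH, hτH1]
        have he : (0:ℝ) * F μL + 1 * (F μ0 + ν / (1 - ν) - k / (1 - ν) * (1 - μ0))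
            = F μ0 + s / (1 - ν) := by rw [← hbc]; ring
        rw [he]
        exact le_max_right _ _
      · simp only [ratingValue, hL, hH]
        have hτH1 : τH ≤ 1 := by linarith
        have hrw : τL * F μ0 + τH * (F μ0 + ν / (1 - ν) - k / (1 - ν) * (1 - μ0))
            = F μ0 + τH * (s / (1 - ν)) := by
          have hτL : τL = 1 - τH := by linarith
          rw [hτL, ← hbc]; ring
        rw [hrw]
        rcases le_or_gt 0 (s / (1 - ν)) with hx | hx
        · have h3 : τH * (s / (1 - ν)) ≤ s / (1 - ν) := by nlinarith
          exact le_trans (by linarith) (le_max_right _ _)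
        · have h3 : τH * (s / (1 - ν)) ≤ 0 :=
            mul_nonpos_of_nonneg_of_nonpos hτH0 (le_of_lt hx)
          exact le_trans (by linarith) (le_max_left _ _)
  have := max_lt key1 key2
  have h4 : max (F μ0) (F μ0 + s / (1 - ν)) < max (F μ0) (F μ0 + s / (1 - ν)) :=
    lt_of_lt_of_le (lt_of_lt_of_le this hle) hub
  exact absurd h4 (lt_irrefl _)
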